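/- Let α ∈ (0,1), t > 0, and define g_α(u) = (sin(πα)/(πα)) ∫₀^∞ e^{−u (ξ cos(πα/2))^{1/α}} / (ξ² + 2ξ cos(πα) + 1) dξ for u > 0. Then lim_{p→∞, p ∈ ℕ} (1/p) · g_α(t (2p)^{1/α}) / g_α(t p^{1/α})² = π t^α / (4 Γ(α) sin(πα/2)). In particular, for all sufficiently large p ∈ ℕ, g_α(t(2p)^{1/α}) ≠ g_α(t p^{1/α})². -/

import Mathlib

open MeasureTheory Real Filter Topology

/-- `g_α(u) = (sin(πα)/(πα)) ∫₀^∞ e^{−u (ξ cos(πα/2))^{1/α}} / (ξ² + 2ξ cos(πα) + 1) dξ`. -/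
noncomputable def gStable (α : ℝ) (u : ℝ) : ℝ :=
  (Real.sin (π * α) / (π * α)) *
    ∫ ξ in Set.Ioi (0 : ℝ),
      Real.exp (-u * (ξ * Real.cos (π * α / 2)) ^ (1 / α)) /
        (ξ ^ 2 + 2 * ξ * Real.cos (π * α) + 1)

lemma quad_lower_bound (α : ℝ) (x : ℝ) :
    Real.sin (π * α) ^ 2 ≤ x ^ 2 + 2 * x * Real.cos (π * α) + 1 := by
  nlinarith [Real.sin_sq_add_cos_sq (π * α), sq_nonneg (x + Real.cos (π * α))]

/-- Key asymptotics: `u^α g_α(u) → sin(πα) Γ(α) / (π cos(πα/2))` as `u → ∞`. -/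
lemma gStable_key (α : ℝ) (hα : α ∈ Set.Ioo (0 : ℝ) 1) :
    Tendsto (fun u : ℝ => u ^ α * gStable α u) atTop
      (𝓝 (Real.sin (π * α) * Real.Gamma α / (π * Real.cos (π * α / 2)))) := by
  obtain ⟨hα0, hα1⟩ := hα
  set c : ℝ := Real.cos (π * α / 2) with hc_def
  have hπα : 0 < π * α := by positivity
  have hπαπ : π * α < π := by nlinarith [Real.pi_pos]
  have hsin : 0 < Real.sin (π * α) := Real.sin_pos_of_pos_of_lt_pi hπα hπαπ
  have hc : 0 < c := by
    apply Real.cos_pos_of_mem_Ioo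
    constructor
    · nlinarith [Real.pi_pos]
    · nlinarith [Real.pi_pos]
  have hαne : α ≠ 0 := hα0.ne'
  have h1α : (1 : ℝ) ≤ 1 / α := by
    rw [le_div_iff₀ hα0]; linarith
  have h1α0 : (0 : ℝ) < 1 / α := by positivity
  have hcb : 0 < c ^ (1 / α) := Real.rpow_pos_of_pos hc _
  set m : ℝ := Real.sin (π * α) ^ 2 with hm_def
  have hm : 0 < m := by positivity
  -- the rescaled integrand
  set F : ℝ → ℝ → ℝ := fun u s =>
    Real.exp (-(s * c) ^ (1 / α)) /
      ((s * u ^ (-α)) ^ 2 + 2 * (s * u ^ (-α)) * Real.cos (π * α) + 1) with hF_def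
  -- integrability of the base function
  have hIbase : IntegrableOn (fun s : ℝ => Real.exp (-(s * c) ^ (1 / α))) (Set.Ioi 0) := by
    have h := integrableOn_rpow_mul_exp_neg_mul_rpow (s := 0) (p := 1 / α) (b := c ^ (1 / α))
      (by norm_num) h1α0 hcb
    apply h.congr_fun ?_ measurableSet_Ioi
    intro x hx
    have hx0 : (0 : ℝ) < x := hx
    simp only [Real.rpow_zero, one_mul]
    rw [Real.mul_rpow hx0.le hc.le, neg_mul, mul_comm]
  -- value of the limiting integral
  have hIval : ∫ s in Set.Ioi (0 : ℝ), Real.exp (-(s * c) ^ (1 / α)) = c⁻¹ * Real.Gamma (α + 1) := by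
    rw [setIntegral_congr_fun (g := fun s : ℝ => Real.exp (-(c ^ (1 / α)) * s ^ (1 / α)))
      measurableSet_Ioi (fun x hx => by
        have hx0 : (0 : ℝ) < x := hx
        show Real.exp (-(x * c) ^ (1 / α)) = Real.exp (-(c ^ (1 / α)) * x ^ (1 / α))
        rw [Real.mul_rpow hx0.le hc.le, neg_mul, mul_comm]),
      integral_exp_neg_mul_rpow h1α0 hcb]
    congr 1
    · have h2 : (1 / α) * (-1 / (1 / α)) = -1 := by field_simp
      rw [← Real.rpow_mul hc.le, h2, Real.rpow_neg_one]
    · rw [one_div_one_div]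
  have hq : ∀ x : ℝ, 0 < x ^ 2 + 2 * x * Real.cos (π * α) + 1 :=
    fun x => lt_of_lt_of_le hm (quad_lower_bound α x)
  -- dominated convergence
  have hDCT : Tendsto (fun u : ℝ => ∫ s in Set.Ioi (0 : ℝ), F u s) atTop
      (𝓝 (∫ s in Set.Ioi (0 : ℝ), Real.exp (-(s * c) ^ (1 / α)))) := by
    apply tendsto_integral_filter_of_dominated_convergence
      (fun s => Real.exp (-(s * c) ^ (1 / α)) / m)
    · filter_upwards [eventually_gt_atTop (0 : ℝ)] with u hu
      apply Continuous.aestronglyMeasurable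
      apply Continuous.div
      · exact Real.continuous_exp.comp
          (((continuous_id.mul continuous_const).rpow_const fun x => Or.inr h1α0.le).neg)
      · continuity
      · exact fun s => (hq _).ne'
    · filter_upwards [eventually_gt_atTop (0 : ℝ)] with u hu
      filter_upwards [] with s
      rw [hF_def]
      have h1 := quad_lower_bound α (s * u ^ (-α))
      have h2 := hq (s * u ^ (-α))
      rw [Real.norm_eq_abs, abs_of_nonneg (div_nonneg (Real.exp_nonneg _) h2.le)]
      gcongr
    · exact hIbase.div_const m
    · filter_upwards [ae_restrict_mem measurableSet_Ioi] with s hs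
      have hT : Tendsto (fun u : ℝ => s * u ^ (-α)) atTop (𝓝 0) := by
        have := (tendsto_rpow_neg_atTop hα0).const_mul s
        simpa using this
      have hden : Tendsto
          (fun u : ℝ => (s * u ^ (-α)) ^ 2 + 2 * (s * u ^ (-α)) * Real.cos (π * α) + 1)
          atTop (𝓝 1) := by
        have := ((hT.pow 2).add ((hT.const_mul 2).mul_const (Real.cos (π * α)))).add
          (tendsto_const_nhds (x := (1 : ℝ)))
        simpa using this
      have hlim : Tendsto (fun u : ℝ => Real.exp (-(s * c) ^ (1 / α)) /
            ((s * u ^ (-α)) ^ 2 + 2 * (s * u ^ (-α)) * Real.cos (π * α) + 1)) atTop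
            (𝓝 (Real.exp (-(s * c) ^ (1 / α)) / 1)) := (tendsto_const_nhds
        (x := Real.exp (-(s * c) ^ (1 / α)))).div hden one_ne_zero
      simpa [hF_def] using hlim
  -- change of variables
  have heq : ∀ᶠ u : ℝ in atTop, u ^ α * gStable α u =
      Real.sin (π * α) / (π * α) * ∫ s in Set.Ioi (0 : ℝ), F u s := by
    filter_upwards [eventually_gt_atTop (0 : ℝ)] with u hu
    have hua : (0 : ℝ) < u ^ α := Real.rpow_pos_of_pos hu _
    have hpt : ∫ ξ in Set.Ioi (0 : ℝ),
        Real.exp (-u * (ξ * c) ^ (1 / α)) / (ξ ^ 2 + 2 * ξ * Real.cos (π * α) + 1)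
        = ∫ ξ in Set.Ioi (0 : ℝ), F u (u ^ α * ξ) := by
      apply setIntegral_congr_fun measurableSet_Ioi
      intro ξ hξ
      have hξ0 : (0 : ℝ) < ξ := hξ
      simp only [hF_def]
      have e1 : u ^ α * ξ * u ^ (-α) = ξ := by
        rw [mul_comm (u ^ α) ξ, mul_assoc, ← Real.rpow_add hu]
        simp
      have e2 : (u ^ α * ξ * c) ^ (1 / α) = u * (ξ * c) ^ (1 / α) := by
        rw [mul_assoc, Real.mul_rpow hua.le (by positivity), ← Real.rpow_mul hu.le,
          mul_one_div_cancel hαne, Real.rpow_one]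
      rw [e1, e2, neg_mul]
    have hsub : gStable α u = Real.sin (π * α) / (π * α) *
        ((u ^ α)⁻¹ * ∫ s in Set.Ioi (0 : ℝ), F u s) := by
      rw [gStable, ← hc_def, hpt, integral_comp_mul_left_Ioi (F u) 0 hua, mul_zero,
        smul_eq_mul]
    rw [hsub, mul_left_comm, mul_inv_cancel_left₀ hua.ne']
  have hmain := hDCT.const_mul (Real.sin (π * α) / (π * α))
  rw [hIval] at hmain
  have hval : Real.sin (π * α) / (π * α) * (c⁻¹ * Real.Gamma (α + 1)) =
      Real.sin (π * α) * Real.Gamma α / (π * c) := by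
    rw [Real.Gamma_add_one hαne]
    have hπ : (π : ℝ) ≠ 0 := Real.pi_ne_zero
    field_simp
  rw [hval] at hmain
  exact hmain.congr' (heq.mono fun u h => h.symm)

theorem gStable_ratio_asymptotics (α : ℝ) (hα : α ∈ Set.Ioo (0 : ℝ) 1) (t : ℝ) (ht : 0 < t) :
    Tendsto
      (fun p : ℕ =>
        (1 / (p : ℝ)) *
          (gStable α (t * (2 * (p : ℝ)) ^ (1 / α)) / gStable α (t * (p : ℝ) ^ (1 / α)) ^ 2))
      atTop (𝓝 (π * t ^ α / (4 * Real.Gamma α * Real.sin (π * α / 2)))) ∧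
    ∀ᶠ p : ℕ in atTop,
      gStable α (t * (2 * (p : ℝ)) ^ (1 / α)) ≠ gStable α (t * (p : ℝ) ^ (1 / α)) ^ 2 := by
  obtain ⟨hα0, hα1⟩ := hα
  have hαne : α ≠ 0 := hα0.ne'
  have h1α0 : (0 : ℝ) < 1 / α := by positivity
  have hπα : 0 < π * α := by positivity
  have hπαπ : π * α < π := by nlinarith [Real.pi_pos]
  have hsin : 0 < Real.sin (π * α) := Real.sin_pos_of_pos_of_lt_pi hπα hπαπ
  have hc : 0 < Real.cos (π * α / 2) := by
    apply Real.cos_pos_of_mem_Ioo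
    constructor
    · nlinarith [Real.pi_pos]
    · nlinarith [Real.pi_pos]
  have hΓ : 0 < Real.Gamma α := Real.Gamma_pos_of_pos hα0
  have hsinh : 0 < Real.sin (π * α / 2) := by
    apply Real.sin_pos_of_pos_of_lt_pi
    · positivity
    · nlinarith [Real.pi_pos]
  have hL : 0 < Real.sin (π * α) * Real.Gamma α / (π * Real.cos (π * α / 2)) := by
    apply div_pos (by positivity) (by positivity)
  set L : ℝ := Real.sin (π * α) * Real.Gamma α / (π * Real.cos (π * α / 2)) with hL_def
  -- the two sequences go to infinity
  have hnat : Tendsto (fun p : ℕ => (p : ℝ)) atTop atTop := tendsto_natCast_atTop_atTop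
  have ha : Tendsto (fun p : ℕ => t * (2 * (p : ℝ)) ^ (1 / α)) atTop atTop :=
    (((tendsto_rpow_atTop h1α0).comp (hnat.const_mul_atTop two_pos)).const_mul_atTop ht)
  have hb : Tendsto (fun p : ℕ => t * (p : ℝ) ^ (1 / α)) atTop atTop :=
    (((tendsto_rpow_atTop h1α0).comp hnat).const_mul_atTop ht)
  have hA : Tendsto (fun p : ℕ => (t * (2 * (p : ℝ)) ^ (1 / α)) ^ α *
      gStable α (t * (2 * (p : ℝ)) ^ (1 / α))) atTop (𝓝 L) :=
    (gStable_key α ⟨hα0, hα1⟩).comp ha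
  have hB : Tendsto (fun p : ℕ => (t * (p : ℝ) ^ (1 / α)) ^ α *
      gStable α (t * (p : ℝ) ^ (1 / α))) atTop (𝓝 L) :=
    (gStable_key α ⟨hα0, hα1⟩).comp hb
  have hT : (0 : ℝ) < t ^ α := Real.rpow_pos_of_pos ht _
  have h2 : Tendsto (fun p : ℕ => (t ^ α / 2) *
      ((t * (2 * (p : ℝ)) ^ (1 / α)) ^ α * gStable α (t * (2 * (p : ℝ)) ^ (1 / α)) /
        ((t * (p : ℝ) ^ (1 / α)) ^ α * gStable α (t * (p : ℝ) ^ (1 / α))) ^ 2))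
      atTop (𝓝 ((t ^ α / 2) * (L / L ^ 2))) :=
    (hA.div (hB.pow 2) (by positivity)).const_mul _
  have hval : (t ^ α / 2) * (L / L ^ 2) =
      π * t ^ α / (4 * Real.Gamma α * Real.sin (π * α / 2)) := by
    rw [hL_def, show π * α = 2 * (π * α / 2) by ring, Real.sin_two_mul]
    have hπ : (π : ℝ) ≠ 0 := Real.pi_ne_zero
    field_simp
    ring
  rw [hval] at h2
  have hEq : ∀ᶠ p : ℕ in atTop,
      (t ^ α / 2) *
      ((t * (2 * (p : ℝ)) ^ (1 / α)) ^ α * gStable α (t * (2 * (p : ℝ)) ^ (1 / α)) /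
        ((t * (p : ℝ) ^ (1 / α)) ^ α * gStable α (t * (p : ℝ) ^ (1 / α))) ^ 2) =
      (1 / (p : ℝ)) *
        (gStable α (t * (2 * (p : ℝ)) ^ (1 / α)) / gStable α (t * (p : ℝ) ^ (1 / α)) ^ 2) := by
    filter_upwards [eventually_ge_atTop 1] with p hp
    have hP : (0 : ℝ) < (p : ℝ) := by exact_mod_cast Nat.lt_of_lt_of_le Nat.zero_lt_one hp
    have e1 : (t * (2 * (p : ℝ)) ^ (1 / α)) ^ α = t ^ α * (2 * (p : ℝ)) := by
      rw [Real.mul_rpow ht.le (Real.rpow_nonneg (by positivity) _),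
        ← Real.rpow_mul (by positivity : (0 : ℝ) ≤ 2 * (p : ℝ)),
        one_div_mul_cancel hαne, Real.rpow_one]
    have e2 : (t * (p : ℝ) ^ (1 / α)) ^ α = t ^ α * (p : ℝ) := by
      rw [Real.mul_rpow ht.le (Real.rpow_nonneg hP.le _),
        ← Real.rpow_mul hP.le, one_div_mul_cancel hαne, Real.rpow_one]
    rw [e1, e2]
    rcases eq_or_ne (gStable α (t * (p : ℝ) ^ (1 / α))) 0 with h | h
    · rw [h]
      simp
    · field_simp
  have hmain := h2.congr' hEq
  refine ⟨hmain, ?_⟩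
  have hpos : 0 < π * t ^ α / (4 * Real.Gamma α * Real.sin (π * α / 2)) :=
    div_pos (by positivity) (by positivity)
  have hev1 := hmain.eventually (eventually_gt_nhds (half_lt_self hpos))
  have hev2 : ∀ᶠ p : ℕ in atTop,
      (1 / (p : ℝ)) < π * t ^ α / (4 * Real.Gamma α * Real.sin (π * α / 2)) / 2 :=
    tendsto_one_div_atTop_nhds_zero_nat.eventually (eventually_lt_nhds (half_pos hpos))
  filter_upwards [hev1, hev2] with p h1 h2' heq2
  rw [heq2] at h1
  set X : ℝ := gStable α (t * (p : ℝ) ^ (1 / α)) ^ 2 with hX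
  have hXq : X / X ≤ 1 := by
    rcases eq_or_ne X 0 with h | h
    · simp [h]
    · simp [div_self h]
  have h3 : (1 / (p : ℝ)) * (X / X) ≤ (1 / (p : ℝ)) * 1 :=
    mul_le_mul_of_nonneg_left hXq (by positivity)
  rw [mul_one] at h3
  linarith
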